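/- Let H ≤ G with H equationally Noetherian. If H is algebraically closed in G, then H is a retract of every subgroup of G of the form ⟨H ∪ X⟩ with X ⊆ G finite; conversely, if H is a retract of each such finitely-generated-over-H subgroup, then H is algebraically closed in G. -/

import Mathlib

/-- `H ≤ G` is algebraically closed in `G`: every finite system of equations with
coefficients in `H` (words in `H * F(x₁, …, xₙ)`, encoded as elements of the free
group on `↥H ⊕ Fin n`, with the letters from `H` evaluated via the inclusion)
which is solvable in `G` is solvable in `H`. -/
def AlgebraicallyClosed {G : Type*} [Group G] (H : Subgroup G) : Prop :=
  ∀ (n : ℕ) (S : Finset (FreeGroup (↥H ⊕ Fin n))),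
    (∃ g : Fin n → G,
        ∀ w ∈ S, FreeGroup.lift (Sum.elim (fun h : ↥H => (h : G)) g) w = 1) →
      ∃ k : Fin n → G, (∀ i, k i ∈ H) ∧
        ∀ w ∈ S, FreeGroup.lift (Sum.elim (fun h : ↥H => (h : G)) k) w = 1

/-- `H` is equationally Noetherian: every system of equations over `H` in finitely
many unknowns is equivalent (over `H`) to a finite subsystem. -/
def EquationallyNoetherian {G : Type*} [Group G] (H : Subgroup G) : Prop :=
  ∀ (n : ℕ) (S : Set (FreeGroup (↥H ⊕ Fin n))),
    ∃ T : Finset (FreeGroup (↥H ⊕ Fin n)), ↑T ⊆ S ∧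
      ∀ k : Fin n → ↥H,
        ((∀ w ∈ S, FreeGroup.lift (Sum.elim id k) w = 1) ↔
          (∀ w ∈ T, FreeGroup.lift (Sum.elim id k) w = 1))

/-- `H` is a retract of `M`: there is an endomorphism of `M` with image inside `H`
fixing `H` pointwise. -/
def IsRetractOf {G : Type*} [Group G] (H M : Subgroup G) : Prop :=
  ∃ ρ : ↥M →* ↥M, (∀ x : ↥M, (ρ x : G) ∈ H) ∧ ∀ x : ↥M, (x : G) ∈ H → ρ x = x

/-- Factorization of a homomorphism through the range of another one with
smaller kernel. -/
theorem exists_factor_through_range {A G : Type*} [Group A] [Group G]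
    (f g : A →* G) (h : ∀ a, f a = 1 → g a = 1) :
    ∃ ρ : ↥f.range →* G, ∀ (a : A) (hx : f a ∈ f.range), ρ ⟨f a, hx⟩ = g a := by
  classical
  have key : ∀ a b : A, f a = f b → g a = g b := by
    intro a b hab
    have h1 : g (a * b⁻¹) = 1 := h _ (by rw [map_mul, map_inv, hab, mul_inv_cancel])
    rw [map_mul, map_inv] at h1
    exact mul_inv_eq_one.mp h1
  choose sec hsec using fun x : ↥f.range => MonoidHom.mem_range.mp x.2
  refine ⟨{ toFun := fun x => g (sec x)
            map_one' := ?_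
            map_mul' := ?_ }, ?_⟩
  · have : g (sec 1) = g 1 := key _ _ (by rw [hsec, map_one]; rfl)
    simpa using this
  · intro x y
    have : g (sec (x * y)) = g (sec x * sec y) := by
      apply key
      rw [map_mul, hsec, hsec, hsec]
      rfl
    simpa [map_mul] using this
  · intro a hx
    exact key _ _ (by rw [hsec])

/-- An equationally Noetherian subgroup `H ≤ G` is algebraically closed in `G` iff
`H` is a retract of every subgroup of `G` finitely generated over `H`. -/
theorem algClosed_iff_retract {G : Type*} [Group G] (H : Subgroup G)
    (hN : EquationallyNoetherian H) :
    AlgebraicallyClosed H ↔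
      ∀ X : Finset G, IsRetractOf H (Subgroup.closure ((H : Set G) ∪ ↑X)) := by
  classical
  constructor
  · -- Forward direction
    intro hAC X
    set M : Subgroup G := Subgroup.closure ((H : Set G) ∪ ↑X) with hM
    have hHM : H ≤ M := fun x hx => Subgroup.subset_closure (Or.inl hx)
    set n : ℕ := X.card with hn
    set g : Fin n → G := fun i => ((X.equivFin.symm i : G)) with hg
    set evg : FreeGroup (↥H ⊕ Fin n) →* G :=
      FreeGroup.lift (Sum.elim (fun h : ↥H => (h : G)) g) with hevg
    obtain ⟨T, hTS, hT⟩ := hN n {w | evg w = 1}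
    obtain ⟨k, hkH, hkT⟩ := hAC n T ⟨g, fun w hw => hTS hw⟩
    set evk : FreeGroup (↥H ⊕ Fin n) →* G :=
      FreeGroup.lift (Sum.elim (fun h : ↥H => (h : G)) k) with hevk
    set k' : Fin n → ↥H := fun i => ⟨k i, hkH i⟩ with hk'
    set evk' : FreeGroup (↥H ⊕ Fin n) →* ↥H :=
      FreeGroup.lift (Sum.elim id k') with hevk'
    have hcoe : ∀ w, ((evk' w : G)) = evk w := by
      intro w
      refine FreeGroup.lift_unique (f := Sum.elim (fun h : ↥H => (h : G)) k)
        (H.subtype.comp evk') ?_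
      rintro (h | i) <;> simp [evk', k']
    -- T-solution in H
    have hkT' : ∀ w ∈ T, evk' w = 1 := by
      intro w hw
      have := hkT w hw
      exact Subtype.ext (by rw [hcoe]; exact this)
    -- all relations of g are satisfied by k
    have hker : ∀ w, evg w = 1 → evk w = 1 := by
      intro w hw
      have := (hT k').mpr hkT' w hw
      rw [← hcoe, this]
      rfl
    -- range of evg is M
    have hrange : evg.range = M := by
      rw [hevg, FreeGroup.range_lift_eq_closure, Set.Sum.elim_range]
      have h1 : (Set.range fun h : ↥H => (h : G)) = (H : Set G) := Subtype.range_coe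
      have h2 : Set.range g = (↑X : Set G) := by
        have hs : Function.Surjective (X.equivFin.symm) := X.equivFin.symm.surjective
        rw [hg, show (fun i : Fin n => ((X.equivFin.symm i : G))) =
          (fun x : {x // x ∈ X} => (x : G)) ∘ X.equivFin.symm from rfl,
          hs.range_comp]
        ext a; simp
      rw [h1, h2]
    obtain ⟨ρ₀, hρ₀⟩ := exists_factor_through_range evg evk hker
    -- image of ρ₀ lands in H
    have himg : ∀ x : ↥evg.range, ρ₀ x ∈ H := by
      intro x
      obtain ⟨a, ha⟩ := MonoidHom.mem_range.mp x.2
      have hx : x = ⟨evg a, by rw [ha]; exact x.2⟩ := Subtype.ext ha.symm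
      rw [hx, hρ₀]
      have : evk a ∈ evk.range := ⟨a, rfl⟩
      have hrle : evk.range ≤ H := by
        rw [hevk]
        apply FreeGroup.range_lift_le
        rintro x ⟨(h | i), rfl⟩
        · exact h.2
        · exact hkH i
      exact hrle this
    set eM : ↥M ≃* ↥evg.range := MulEquiv.subgroupCongr hrange.symm with heM
    refine ⟨MonoidHom.codRestrict (ρ₀.comp eM.toMonoidHom) M
      (fun x => hHM (himg (eM x))), fun x => himg (eM x), ?_⟩
    intro x hx
    apply Subtype.ext
    show ρ₀ (eM x) = (x : G)
    have ha : evg (FreeGroup.of (Sum.inl ⟨(x : G), hx⟩)) = (x : G) := by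
      simp [evg]
    have hex : eM x = ⟨evg (FreeGroup.of (Sum.inl ⟨(x : G), hx⟩)), by
        rw [ha]; show (x : G) ∈ evg.range; rw [hrange]; exact x.2⟩ := by
      apply Subtype.ext
      rw [MulEquiv.subgroupCongr_apply]
      exact ha.symm
    rw [hex, hρ₀]
    simp [evk]
  · -- Converse
    intro hR n S
    rintro ⟨g, hg⟩
    set X : Finset G := Finset.image g Finset.univ with hX
    set M : Subgroup G := Subgroup.closure ((H : Set G) ∪ ↑X) with hM
    obtain ⟨ρ, hρH, hρfix⟩ := hR X
    have hHM : H ≤ M := fun x hx => Subgroup.subset_closure (Or.inl hx)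
    have hgM : ∀ i, g i ∈ M := fun i =>
      Subgroup.subset_closure (Or.inr (by simp [hX]))
    set gM : Fin n → ↥M := fun i => ⟨g i, hgM i⟩ with hgMdef
    set f₁ : FreeGroup (↥H ⊕ Fin n) →* ↥M :=
      FreeGroup.lift (Sum.elim (fun h : ↥H => (⟨(h : G), hHM h.2⟩ : ↥M)) gM) with hf₁
    have hcoe1 : ∀ w, ((f₁ w : G)) =
        FreeGroup.lift (Sum.elim (fun h : ↥H => (h : G)) g) w := by
      intro w
      refine FreeGroup.lift_unique (f := Sum.elim (fun h : ↥H => (h : G)) g)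
        (M.subtype.comp f₁) ?_
      rintro (h | i) <;> simp [f₁, gM]
    set k : Fin n → G := fun i => ((ρ (gM i) : G)) with hk
    refine ⟨k, fun i => hρH (gM i), ?_⟩
    have hcoe2 : ∀ w, ((ρ (f₁ w) : G)) =
        FreeGroup.lift (Sum.elim (fun h : ↥H => (h : G)) k) w := by
      intro w
      refine FreeGroup.lift_unique (f := Sum.elim (fun h : ↥H => (h : G)) k)
        (M.subtype.comp (ρ.comp f₁)) ?_
      rintro (h | i)
      · have : ρ ⟨(h : G), hHM h.2⟩ = ⟨(h : G), hHM h.2⟩ := hρfix _ h.2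
        simp [f₁, this]
      · simp [f₁, k]
    intro w hw
    have h1 : f₁ w = 1 := by
      apply Subtype.ext
      rw [hcoe1 w, hg w hw]
      rfl
    rw [← hcoe2 w, h1, map_one]
    rfl
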